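/- arXiv:2412.18571 — 5 statements merged into one kernel-verified Lean document; each statement's English description precedes it below -/
import Mathlib

section
/- For Boolean values x1, x2, x3 ∈ {0,1}, the minimum over xc ∈ {0,1} of the clause-encoding function Q(x1, x2, x3, xc) equals 0 if x1 + x2 + x3 ≥ 1 (i.e., the clause with literal values x1, x2, x3 is satisfied), and equals 1 if x1 = x2 = x3 = 0 (i.e., the clause is unsatisfied). -/
/-- The clause-encoding function
`Q(x1,x2,x3,xc) = xc·(2 − (x1+x2+x3)) + (x1·x2 + x2·x3 + x3·x1) − (x1+x2+x3) + 1`. -/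
def clauseQ (x1 x2 x3 xc : ℤ) : ℤ :=
  xc * (2 - (x1 + x2 + x3)) + (x1 * x2 + x2 * x3 + x3 * x1) - (x1 + x2 + x3) + 1

/-- For Boolean `x1, x2, x3 ∈ {0,1}`, the minimum of the clause-encoding function over
`xc ∈ {0,1}` equals `0` if the clause is satisfied (some literal value is 1, i.e.
`x1 + x2 + x3 ≥ 1`), and equals `1` if the clause is unsatisfied (`x1 = x2 = x3 = 0`). -/
theorem clauseQ_min (x1 x2 x3 : ℤ)
    (h1 : x1 = 0 ∨ x1 = 1) (h2 : x2 = 0 ∨ x2 = 1) (h3 : x3 = 0 ∨ x3 = 1) :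
    (1 ≤ x1 + x2 + x3 →
      min (clauseQ x1 x2 x3 0) (clauseQ x1 x2 x3 1) = 0) ∧
    (x1 = 0 ∧ x2 = 0 ∧ x3 = 0 →
      min (clauseQ x1 x2 x3 0) (clauseQ x1 x2 x3 1) = 1) := by
  rcases h1 with rfl|rfl <;> rcases h2 with rfl|rfl <;> rcases h3 with rfl|rfl <;> simp [clauseQ] <;> omega
end

section
/- Let φ be a 3-CNF formula with m clauses over n Boolean variables, where under an assignment x ∈ {0,1}^n the k-th clause has literal values l_{k,1}(x), l_{k,2}(x), l_{k,3}(x) ∈ {0,1}. Then for every fixed assignment x, the minimum over auxiliary values a ∈ {0,1}^m of the total encoding Q(φ)(x, a) = ∑_{k=1}^m Q(l_{k,1}(x), l_{k,2}(x), l_{k,3}(x), a_k) equals the number of clauses of φ that are unsatisfied by x. -/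
/-- A vector is Boolean when every coordinate is 0 or 1. -/
def BoolVec {n : ℕ} (x : Fin n → ℤ) : Prop := ∀ i, x i = 0 ∨ x i = 1

/-- A literal over `n` variables: a variable index together with a polarity
(`true` = positive literal, `false` = negated literal). -/
abbrev Literal (n : ℕ) := Fin n × Bool

/-- The value of a literal under an assignment: the coordinate `x j` for a positive
literal, and the Boolean negation `1 - x j` for a negated literal. -/
def litVal {n : ℕ} (l : Literal n) (x : Fin n → ℤ) : ℤ :=
  if l.2 then x l.1 else 1 - x l.1

/-- A 3-SAT clause: a triple of literals. -/
abbrev Clause3 (n : ℕ) := Literal n × Literal n × Literal n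

/-- A clause is satisfied exactly when at least one of its literal values equals 1. -/
def clauseSat {n : ℕ} (c : Clause3 n) (x : Fin n → ℤ) : Prop :=
  litVal c.1 x = 1 ∨ litVal c.2.1 x = 1 ∨ litVal c.2.2 x = 1

instance {n : ℕ} (c : Clause3 n) (x : Fin n → ℤ) : Decidable (clauseSat c x) := by
  unfold clauseSat; infer_instance

/-- An assignment satisfies a 3-CNF formula when it satisfies every clause. -/
def SatCNF {n m : ℕ} (φ : Fin m → Clause3 n) (x : Fin n → ℤ) : Prop :=
  ∀ k, clauseSat (φ k) x

/-- The total encoding `Q(φ)(x, a) = ∑ₖ Q(l_{k,1}(x), l_{k,2}(x), l_{k,3}(x), aₖ)`. -/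
def Qtot {n m : ℕ} (φ : Fin m → Clause3 n) (x : Fin n → ℤ) (a : Fin m → ℤ) : ℤ :=
  ∑ k, clauseQ (litVal (φ k).1 x) (litVal (φ k).2.1 x) (litVal (φ k).2.2 x) (a k)

lemma litVal_bool {n : ℕ} (l : Literal n) (x : Fin n → ℤ) (hx : BoolVec x) :
    litVal l x = 0 ∨ litVal l x = 1 := by
  unfold litVal
  rcases hx l.1 with h | h <;> rcases l.2 <;> simp [h]

lemma clauseQ_lb (b1 b2 b3 c : ℤ) (h1 : b1 = 0 ∨ b1 = 1) (h2 : b2 = 0 ∨ b2 = 1)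
    (h3 : b3 = 0 ∨ b3 = 1) (hc : c = 0 ∨ c = 1) :
    (if b1 = 1 ∨ b2 = 1 ∨ b3 = 1 then (0:ℤ) else 1) ≤ clauseQ b1 b2 b3 c := by
  rcases h1 with rfl | rfl <;> rcases h2 with rfl | rfl <;> rcases h3 with rfl | rfl <;>
    rcases hc with rfl | rfl <;> norm_num [clauseQ]

lemma clauseQ_exists (b1 b2 b3 : ℤ) (h1 : b1 = 0 ∨ b1 = 1) (h2 : b2 = 0 ∨ b2 = 1)
    (h3 : b3 = 0 ∨ b3 = 1) :
    ∃ c : ℤ, (c = 0 ∨ c = 1) ∧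
      clauseQ b1 b2 b3 c = (if b1 = 1 ∨ b2 = 1 ∨ b3 = 1 then (0:ℤ) else 1) := by
  rcases h1 with rfl | rfl <;> rcases h2 with rfl | rfl <;> rcases h3 with rfl | rfl
  · exact ⟨0, Or.inl rfl, by norm_num [clauseQ]⟩
  · exact ⟨0, Or.inl rfl, by norm_num [clauseQ]⟩
  · exact ⟨0, Or.inl rfl, by norm_num [clauseQ]⟩
  · exact ⟨0, Or.inl rfl, by norm_num [clauseQ]⟩
  · exact ⟨0, Or.inl rfl, by norm_num [clauseQ]⟩
  · exact ⟨0, Or.inl rfl, by norm_num [clauseQ]⟩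
  · exact ⟨0, Or.inl rfl, by norm_num [clauseQ]⟩
  · exact ⟨1, Or.inr rfl, by norm_num [clauseQ]⟩

/-- For every fixed Boolean assignment `x`, the minimum over Boolean auxiliary vectors
`a ∈ {0,1}^m` of the total encoding `Q(φ)(x, a)` equals the number of clauses of `φ`
unsatisfied by `x`. -/
theorem Qtot_min_eq_unsat_count {n m : ℕ} (φ : Fin m → Clause3 n)
    (x : Fin n → ℤ) (hx : BoolVec x) :
    IsLeast {v : ℤ | ∃ a : Fin m → ℤ, BoolVec a ∧ Qtot φ x a = v}
      ((Finset.univ.filter fun k => ¬ clauseSat (φ k) x).card : ℤ) := by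

  have key : ∀ k : Fin m, ∃ c : ℤ, (c = 0 ∨ c = 1) ∧
      clauseQ (litVal (φ k).1 x) (litVal (φ k).2.1 x) (litVal (φ k).2.2 x) c
        = (if clauseSat (φ k) x then (0:ℤ) else 1) := by
    intro k
    exact clauseQ_exists _ _ _ (litVal_bool _ _ hx) (litVal_bool _ _ hx) (litVal_bool _ _ hx)
  have hcard : ((Finset.univ.filter fun k => ¬ clauseSat (φ k) x).card : ℤ)
      = ∑ k : Fin m, (if clauseSat (φ k) x then (0:ℤ) else 1) := by
    rw [Finset.card_filter]
    push_cast
    exact Finset.sum_congr rfl fun k _ => by by_cases h : clauseSat (φ k) x <;> simp [h]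
  constructor
  · choose c hc0 hc1 using key
    refine ⟨c, hc0, ?_⟩
    rw [hcard]
    unfold Qtot
    exact Finset.sum_congr rfl fun k _ => hc1 k
  · rintro v ⟨a, ha, rfl⟩
    rw [hcard]
    unfold Qtot
    apply Finset.sum_le_sum
    intro k _
    exact clauseQ_lb _ _ _ _ (litVal_bool _ _ hx) (litVal_bool _ _ hx)
      (litVal_bool _ _ hx) (ha k)
end

section
/- Let φ be a 3-CNF formula with m clauses over n Boolean variables, where under an assignment x ∈ {0,1}^n the k-th clause has literal values l_{k,1}(x), l_{k,2}(x), l_{k,3}(x) ∈ {0,1}, and let Q(φ)(x, a) = ∑_{k=1}^m Q(l_{k,1}(x), l_{k,2}(x), l_{k,3}(x), a_k). Then the minimum of Q(φ) over all (x, a) ∈ {0,1}^n × {0,1}^m equals 0 if and only if φ is satisfiable. -/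
/-- The minimum of `Q(φ)` over all Boolean pairs `(x, a) ∈ {0,1}^n × {0,1}^m` equals `0`
if and only if `φ` is satisfiable. -/
theorem Qtot_min_zero_iff_satisfiable {n m : ℕ} (φ : Fin m → Clause3 n) :
    IsLeast {v : ℤ | ∃ (x : Fin n → ℤ) (a : Fin m → ℤ),
        BoolVec x ∧ BoolVec a ∧ Qtot φ x a = v} 0 ↔
      ∃ x : Fin n → ℤ, BoolVec x ∧ SatCNF φ x := by
  have hlit : ∀ (l : Literal n) (x : Fin n → ℤ), BoolVec x →
      litVal l x = 0 ∨ litVal l x = 1 := by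
    intro l x hx
    unfold litVal
    rcases hx l.1 with h | h <;> split <;> simp [h]
  have hQnn : ∀ b1 b2 b3 c : ℤ, (b1 = 0 ∨ b1 = 1) → (b2 = 0 ∨ b2 = 1) →
      (b3 = 0 ∨ b3 = 1) → (c = 0 ∨ c = 1) → 0 ≤ clauseQ b1 b2 b3 c := by
    intro b1 b2 b3 c h1 h2 h3 hc
    rcases h1 with rfl | rfl <;> rcases h2 with rfl | rfl <;>
      rcases h3 with rfl | rfl <;> rcases hc with rfl | rfl <;> decide
  have hQzero : ∀ b1 b2 b3 c : ℤ, (b1 = 0 ∨ b1 = 1) → (b2 = 0 ∨ b2 = 1) →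
      (b3 = 0 ∨ b3 = 1) → (c = 0 ∨ c = 1) → clauseQ b1 b2 b3 c = 0 →
      (b1 = 1 ∨ b2 = 1 ∨ b3 = 1) := by
    intro b1 b2 b3 c h1 h2 h3 hc h
    rcases h1 with rfl | rfl <;> rcases h2 with rfl | rfl <;>
      rcases h3 with rfl | rfl <;> rcases hc with rfl | rfl <;> revert h <;> decide
  have hQsat : ∀ b1 b2 b3 : ℤ, (b1 = 0 ∨ b1 = 1) → (b2 = 0 ∨ b2 = 1) →
      (b3 = 0 ∨ b3 = 1) → (b1 = 1 ∨ b2 = 1 ∨ b3 = 1) →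
      clauseQ b1 b2 b3 (b1 * b2 * b3) = 0 := by
    intro b1 b2 b3 h1 h2 h3 hs
    rcases h1 with rfl | rfl <;> rcases h2 with rfl | rfl <;>
      rcases h3 with rfl | rfl <;> revert hs <;> decide
  constructor
  · rintro ⟨⟨x, a, hx, ha, hQ⟩, -⟩
    refine ⟨x, hx, fun k => ?_⟩
    have hterm : ∀ j : Fin m, 0 ≤ clauseQ (litVal (φ j).1 x) (litVal (φ j).2.1 x)
        (litVal (φ j).2.2 x) (a j) :=
      fun j => hQnn _ _ _ _ (hlit _ _ hx) (hlit _ _ hx) (hlit _ _ hx) (ha j)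
    have h0 : clauseQ (litVal (φ k).1 x) (litVal (φ k).2.1 x)
        (litVal (φ k).2.2 x) (a k) = 0 := by
      have := (Finset.sum_eq_zero_iff_of_nonneg (fun j _ => hterm j)).mp hQ
      exact this k (Finset.mem_univ k)
    exact hQzero _ _ _ _ (hlit _ _ hx) (hlit _ _ hx) (hlit _ _ hx) (ha k) h0
  · rintro ⟨x, hx, hsat⟩
    constructor
    · refine ⟨x, fun k => litVal (φ k).1 x * litVal (φ k).2.1 x * litVal (φ k).2.2 x,
        hx, fun k => ?_, ?_⟩
      · rcases hlit (φ k).1 x hx with h1 | h1 <;>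
          rcases hlit (φ k).2.1 x hx with h2 | h2 <;>
          rcases hlit (φ k).2.2 x hx with h3 | h3 <;> simp [h1, h2, h3]
      · exact Finset.sum_eq_zero fun k _ =>
          hQsat _ _ _ (hlit _ _ hx) (hlit _ _ hx) (hlit _ _ hx) (hsat k)
    · rintro v ⟨y, a, hy, ha, rfl⟩
      exact Finset.sum_nonneg fun j _ =>
        hQnn _ _ _ _ (hlit _ _ hy) (hlit _ _ hy) (hlit _ _ hy) (ha j)
end

section
/- Let H be an Ising Hamiltonian on n spins with couplings J and fields h, fix distinct indices i, j, and let H_M be the merged Hamiltonian on n−1 spins obtained by deleting spin j, adding J_{jk} to the coupling J_{ik} for every k ∉ {i, j}, and adding h_j to the field h_i. If every ground state s of H satisfies s_i = s_j, then min H_M = min H + J_{ij}, and the map sending a configuration s' on the remaining n−1 spins to its extension with s_j := s_i is a bijection from the ground states of H_M onto the ground states of H. -/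
open Finset

/-- The Ising Hamiltonian `H(s) = −∑_{k<l} J_{kl} s_k s_l − ∑_k h_k s_k` on a finite,
linearly ordered index set of spins. -/
def ising {ι : Type*} [Fintype ι] [LinearOrder ι]
    (J : ι → ι → ℝ) (h : ι → ℝ) (s : ι → ℝ) : ℝ :=
  -(∑ k, ∑ l, if k < l then J k l * s k * s l else 0) - ∑ k, h k * s k

/-- A spin configuration: every coordinate is `1` or `-1`. -/
def SpinVec {ι : Type*} (s : ι → ℝ) : Prop := ∀ i, s i = 1 ∨ s i = -1

/-- A ground state: a spin configuration minimizing the Ising energy. -/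
def GroundState {ι : Type*} [Fintype ι] [LinearOrder ι]
    (J : ι → ι → ℝ) (h : ι → ℝ) (s : ι → ℝ) : Prop :=
  SpinVec s ∧ ∀ t : ι → ℝ, SpinVec t → ising J h s ≤ ising J h t

section aux
variable {ι : Type*} [Fintype ι] [LinearOrder ι] (J : ι → ι → ℝ) (h : ι → ℝ)

lemma energySet_finite : {E : ℝ | ∃ s : ι → ℝ, SpinVec s ∧ ising J h s = E}.Finite := by
  have h1 : {s : ι → ℝ | SpinVec s}.Finite := by
    apply Set.Finite.subset (Set.Finite.pi (fun _ : ι => (Set.finite_singleton (-1:ℝ)).insert 1))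
    intro s hs k _
    rcases hs k with h' | h' <;> simp [h']
  have : {E : ℝ | ∃ s : ι → ℝ, SpinVec s ∧ ising J h s = E} = ising J h '' {s | SpinVec s} := by
    ext E; simp [Set.mem_image]
  rw [this]; exact h1.image _

lemma energySet_nonempty : {E : ℝ | ∃ s : ι → ℝ, SpinVec s ∧ ising J h s = E}.Nonempty :=
  ⟨ising J h (fun _ => 1), ⟨fun _ => 1, fun _ => Or.inl rfl, rfl⟩⟩

lemma exists_ground : ∃ s : ι → ℝ, GroundState J h s ∧
    ising J h s = sInf {E : ℝ | ∃ s : ι → ℝ, SpinVec s ∧ ising J h s = E} := by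
  obtain ⟨s, hsv, hE⟩ := (energySet_nonempty J h).csInf_mem (energySet_finite J h)
  exact ⟨s, ⟨hsv, fun t ht => hE.symm ▸ csInf_le (energySet_finite J h).bddBelow ⟨t, ht, rfl⟩⟩, hE⟩

lemma ground_energy {s : ι → ℝ} (hs : GroundState J h s) :
    ising J h s = sInf {E : ℝ | ∃ s : ι → ℝ, SpinVec s ∧ ising J h s = E} := by
  refine le_antisymm (le_csInf (energySet_nonempty J h) ?_)
    (csInf_le (energySet_finite J h).bddBelow ⟨s, hs.1, rfl⟩)
  rintro E ⟨t, ht, rfl⟩; exact hs.2 t ht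

end aux

set_option maxHeartbeats 1000000 in
theorem ising_ext {n : ℕ} (J : Fin n → Fin n → ℝ) (h : Fin n → ℝ)
    (hJsymm : ∀ k l, J k l = J l k)
    (i j : Fin n) (hij : i ≠ j)
    (J' : {k : Fin n // k ≠ j} → {k : Fin n // k ≠ j} → ℝ)
    (h' : {k : Fin n // k ≠ j} → ℝ)
    (hJ' : ∀ k l : {k : Fin n // k ≠ j},
      J' k l = if (k : Fin n) = i then J k l + J j l
               else if (l : Fin n) = i then J k l + J k j
               else J k l)
    (hh' : ∀ k : {k : Fin n // k ≠ j},
      h' k = if (k : Fin n) = i then h i + h j else h k)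
    (s' : {k : Fin n // k ≠ j} → ℝ) (hs' : SpinVec s') :
    ising J' h' s' =
      ising J h (fun k => if hk : k = j then s' ⟨i, hij⟩ else s' ⟨k, hk⟩) + J i j := by
  set s : Fin n → ℝ := fun k => if hk : k = j then s' ⟨i, hij⟩ else s' ⟨k, hk⟩ with hs_def
  have hcoe : ∀ k : {k : Fin n // k ≠ j}, s (k : Fin n) = s' k := by
    intro k; simp only [hs_def, dif_neg k.2]
  have hsi : s i = s' ⟨i, hij⟩ := by simp only [hs_def, dif_neg hij]
  have hsj : s j = s i := by simp only [hs_def, dif_pos, dif_neg hij]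
  have hsq : s i * s i = 1 := by
    rw [hsi]; rcases hs' ⟨i, hij⟩ with h1 | h1 <;> rw [h1] <;> norm_num
  set E : Finset (Fin n) := Finset.univ.erase j with hE_def
  have hE : ∀ x : Fin n, x ∈ E ↔ x ≠ j := by intro x; simp [hE_def]
  have hiE : i ∈ E := (hE i).2 hij
  -- abbreviations
  set F : Fin n → Fin n → ℝ := fun a b => if a < b then J a b * s a * s b else 0 with hF_def
  set G : Fin n → Fin n → ℝ := fun a b =>
    if a < b then (if a = i then J j b else if b = i then J a j else 0) * s a * s b else 0
    with hG_def
  -- claim 1 : subtype double sum = erase-j double sum of F + G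
  have claim1 : (∑ k : {k : Fin n // k ≠ j}, ∑ l : {k : Fin n // k ≠ j},
      if k < l then J' k l * s' k * s' l else 0)
      = ∑ k ∈ E, ∑ l ∈ E, (F k l + G k l) := by
    rw [Finset.sum_subtype E hE]
    refine Finset.sum_congr rfl fun k _ => ?_
    rw [Finset.sum_subtype E hE]
    refine Finset.sum_congr rfl fun l _ => ?_
    rw [hJ' k l, ← hcoe k, ← hcoe l]
    simp only [hF_def, hG_def, Subtype.coe_lt_coe]
    split_ifs <;> ring
  -- claim 2 : fields
  have claim2 : (∑ k : {k : Fin n // k ≠ j}, h' k * s' k)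
      = h j * s i + ∑ k ∈ E, h k * s k := by
    have step : (∑ k : {k : Fin n // k ≠ j}, h' k * s' k)
        = ∑ k ∈ E, (if k = i then h i + h j else h k) * s k := by
      rw [Finset.sum_subtype E hE]
      refine Finset.sum_congr rfl fun k _ => ?_
      rw [hh' k, ← hcoe k]
    rw [step, ← Finset.add_sum_erase E _ hiE,
      ← Finset.add_sum_erase E (fun k => h k * s k) hiE]
    have h2 : ∀ m ∈ E.erase i, (if m = i then h i + h j else h m) * s m = h m * s m := by
      intro m hm; rw [if_neg (Finset.mem_erase.1 hm).1]
    rw [Finset.sum_congr rfl h2, if_pos rfl]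
    ring
  -- split full double F-sum
  have hsplit : (∑ k, ∑ l, F k l)
      = (∑ l ∈ E, F j l) + ((∑ k ∈ E, F k j) + ∑ k ∈ E, ∑ l ∈ E, F k l) := by
    rw [← Finset.add_sum_erase Finset.univ (fun k => ∑ l, F k l) (Finset.mem_univ j), ← hE_def]
    have hFjj : F j j = 0 := by simp [hF_def]
    have h1 : (∑ l, F j l) = ∑ l ∈ E, F j l := by
      rw [← Finset.add_sum_erase Finset.univ (F j) (Finset.mem_univ j), ← hE_def, hFjj, zero_add]
    have h2 : ∀ k ∈ E, (∑ l, F k l) = F k j + ∑ l ∈ E, F k l := by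
      intro k _
      rw [← Finset.add_sum_erase Finset.univ (F k) (Finset.mem_univ j), ← hE_def]
    rw [h1, Finset.sum_congr rfl h2, Finset.sum_add_distrib]
  -- field split
  have hfsplit : (∑ k, h k * s k) = h j * s j + ∑ k ∈ E, h k * s k := by
    rw [← Finset.add_sum_erase Finset.univ (fun k => h k * s k) (Finset.mem_univ j), ← hE_def]
  -- the boundary sums
  have hFj : (∑ l ∈ E, F j l) + (∑ k ∈ E, F k j) = ∑ m ∈ E, J m j * s m * s i := by
    rw [← Finset.sum_add_distrib]
    refine Finset.sum_congr rfl fun m hm => ?_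
    have hmj : m ≠ j := ((hE m).1 hm)
    simp only [hF_def]
    rcases lt_or_gt_of_ne hmj with hlt | hlt
    · rw [if_neg (asymm hlt), if_pos hlt, hsj]; ring
    · rw [if_pos hlt, if_neg (asymm hlt), hJsymm j m, hsj]; ring
  -- the G sum
  have hG1 : ∀ k ∈ E.erase i, (∑ l ∈ E, G k l) = (if k < i then J k j * s k * s i else 0) := by
    intro k hk
    have hki : k ≠ i := (Finset.mem_erase.1 hk).1
    rw [← Finset.add_sum_erase E (G k) hiE]
    have hz : ∀ l ∈ E.erase i, G k l = 0 := by
      intro l hl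
      have hli : l ≠ i := (Finset.mem_erase.1 hl).1
      simp only [hG_def, if_neg hki, if_neg hli]
      by_cases hkl : k < l
      · rw [if_pos hkl]; ring
      · rw [if_neg hkl]
    rw [Finset.sum_congr rfl hz, Finset.sum_const, smul_zero, add_zero]
    simp only [hG_def, if_neg hki]
    split_ifs <;>
      first
        | rfl
        | (exact absurd rfl (by assumption))
        | (exact absurd (by assumption : k = i) hki)
  have hGi : (∑ l ∈ E, G i l) = ∑ l ∈ E.erase i, (if i < l then J j l * s i * s l else 0) := by
    rw [← Finset.add_sum_erase E (G i) hiE]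
    have : G i i = 0 := by simp [hG_def]
    rw [this, zero_add]
    refine Finset.sum_congr rfl fun l hl => ?_
    simp only [hG_def]
    split_ifs <;> first | rfl | (exact absurd rfl (by assumption))
  have hGsum : (∑ k ∈ E, ∑ l ∈ E, G k l) = ∑ m ∈ E.erase i, J m j * s m * s i := by
    rw [← Finset.add_sum_erase E (fun k => ∑ l ∈ E, G k l) hiE, hGi,
      Finset.sum_congr rfl hG1, ← Finset.sum_add_distrib]
    refine Finset.sum_congr rfl fun m hm => ?_
    have hmi : m ≠ i := (Finset.mem_erase.1 hm).1
    rcases lt_or_gt_of_ne hmi with hlt | hlt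
    · rw [if_neg (asymm hlt), if_pos hlt]; ring
    · rw [if_pos hlt, if_neg (asymm hlt), hJsymm j m]; ring
  have hEi : (∑ m ∈ E, J m j * s m * s i) = J i j + ∑ m ∈ E.erase i, J m j * s m * s i := by
    rw [← Finset.add_sum_erase E (fun m => J m j * s m * s i) hiE]
    have : J i j * s i * s i = J i j := by
      rw [mul_assoc, hsq, mul_one]
    rw [this]
  -- assemble
  simp only [ising]
  rw [claim1, claim2, hsplit, hfsplit]
  simp only [Finset.sum_add_distrib]
  rw [hGsum]
  have := hFj
  rw [hEi] at this
  rw [hsj]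
  linarith [this]


/-- If every ground state of `H` has `s_i = s_j` (the edge `(i,j)` is aligned), then the
merged Hamiltonian `H_M` (delete spin `j`, add `J_{jk}` to `J_{ik}` for `k ∉ {i,j}`,
add `h_j` to `h_i`) satisfies `min H_M = min H + J_{ij}`, and extending a configuration
on the remaining spins by `s_j := s_i` is a bijection from the ground states of `H_M`
onto the ground states of `H`. -/
theorem ising_merge_groundStates {n : ℕ} (J : Fin n → Fin n → ℝ) (h : Fin n → ℝ)
    (hJsymm : ∀ k l, J k l = J l k)
    (i j : Fin n) (hij : i ≠ j)
    (J' : {k : Fin n // k ≠ j} → {k : Fin n // k ≠ j} → ℝ)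
    (h' : {k : Fin n // k ≠ j} → ℝ)
    (hJ' : ∀ k l : {k : Fin n // k ≠ j},
      J' k l = if (k : Fin n) = i then J k l + J j l
               else if (l : Fin n) = i then J k l + J k j
               else J k l)
    (hh' : ∀ k : {k : Fin n // k ≠ j},
      h' k = if (k : Fin n) = i then h i + h j else h k)
    (haligned : ∀ s : Fin n → ℝ, GroundState J h s → s i = s j) :
    sInf {E : ℝ | ∃ s' : {k : Fin n // k ≠ j} → ℝ, SpinVec s' ∧ ising J' h' s' = E}
      = sInf {E : ℝ | ∃ s : Fin n → ℝ, SpinVec s ∧ ising J h s = E} + J i j ∧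
    Set.BijOn
      (fun (s' : {k : Fin n // k ≠ j} → ℝ) (k : Fin n) =>
        if hk : k = j then s' ⟨i, hij⟩ else s' ⟨k, hk⟩)
      {s' | GroundState J' h' s'} {s | GroundState J h s} := by
  set ext : ({k : Fin n // k ≠ j} → ℝ) → Fin n → ℝ :=
    fun s' k => if hk : k = j then s' ⟨i, hij⟩ else s' ⟨k, hk⟩ with hext_def
  have hext_sv : ∀ s', SpinVec s' → SpinVec (ext s') := by
    intro s' hs' k
    simp only [hext_def]
    split <;> apply hs'
  have hext_key : ∀ s', SpinVec s' →
      ising J' h' s' = ising J h (ext s') + J i j := by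
    intro s' hs'
    exact ising_ext J h hJsymm i j hij J' h' hJ' hh' s' hs'
  -- inf facts
  set SH := {E : ℝ | ∃ s : Fin n → ℝ, SpinVec s ∧ ising J h s = E} with hSH
  set SM := {E : ℝ | ∃ s' : {k : Fin n // k ≠ j} → ℝ, SpinVec s' ∧ ising J' h' s' = E}
    with hSM
  obtain ⟨s₀, hs₀g, hs₀e⟩ := exists_ground J h
  obtain ⟨m₀, hm₀g, hm₀e⟩ := exists_ground J' h'
  have hs₀ij : s₀ i = s₀ j := haligned s₀ hs₀g
  -- restriction of s₀
  set r₀ : {k : Fin n // k ≠ j} → ℝ := fun k => s₀ (k : Fin n) with hr₀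
  have hr₀sv : SpinVec r₀ := fun k => hs₀g.1 _
  have hextr₀ : ext r₀ = s₀ := by
    funext k
    simp only [hext_def, hr₀]
    split
    · rename_i hk; rw [hk]; exact hs₀ij
    · rfl
  have hfirst : sInf SM = sInf SH + J i j := by
    apply le_antisymm
    · calc sInf SM ≤ ising J' h' r₀ :=
            csInf_le (energySet_finite J' h').bddBelow ⟨r₀, hr₀sv, rfl⟩
        _ = ising J h (ext r₀) + J i j := hext_key r₀ hr₀sv
        _ = sInf SH + J i j := by rw [hextr₀, hs₀e]
    · calc sInf SH + J i j ≤ ising J h (ext m₀) + J i j := by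
            have := csInf_le (energySet_finite J h).bddBelow
              (⟨ext m₀, hext_sv m₀ hm₀g.1, rfl⟩ : ising J h (ext m₀) ∈ SH)
            linarith
        _ = ising J' h' m₀ := (hext_key m₀ hm₀g.1).symm
        _ = sInf SM := hm₀e
  refine ⟨hfirst, ?_, ?_, ?_⟩
  · -- MapsTo
    intro s' hs'
    have hsv' : SpinVec s' := hs'.1
    constructor
    · exact hext_sv s' hsv'
    · intro t ht
      have h1 : ising J h (ext s') = ising J' h' s' - J i j := by
        have := hext_key s' hsv'; linarith
      have h2 : ising J' h' s' = sInf SM := ground_energy J' h' hs'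
      have h3 : sInf SH ≤ ising J h t := csInf_le (energySet_finite J h).bddBelow ⟨t, ht, rfl⟩
      rw [h1, h2, hfirst]
      linarith
  · -- InjOn
    intro s₁ _ s₂ _ heq
    funext k
    have := congrFun heq (k : Fin n)
    simpa only [hext_def, dif_neg k.2, Subtype.eta] using this
  · -- SurjOn
    intro t ht
    have htij : t i = t j := haligned t ht
    refine ⟨fun k => t (k : Fin n), ?_, ?_⟩
    · -- is a ground state of the merged system
      have htsv' : SpinVec (fun k : {k : Fin n // k ≠ j} => t (k : Fin n)) := fun k => ht.1 _
      have hextt : ext (fun k => t (k : Fin n)) = t := by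
        funext k
        simp only [hext_def]
        split
        · rename_i hk; rw [hk]; exact htij
        · rfl
      constructor
      · exact htsv'
      · intro u hu
        have h1 : ising J' h' (fun k => t (k : Fin n)) = ising J h t + J i j := by
          rw [hext_key _ htsv', hextt]
        have h2 : ising J' h' u = ising J h (ext u) + J i j := hext_key u hu
        have h3 : ising J h t ≤ ising J h (ext u) := ht.2 _ (hext_sv u hu)
        linarith
    · -- ext of restriction = t
      funext k
      simp only [hext_def]
      split
      · rename_i hk; rw [hk]; exact htij
      · rfl
end

section
/- Let H be an Ising Hamiltonian on n spins with couplings J and fields h, fix distinct indices i, j, and let H_FM be the flip-merged Hamiltonian on n−1 spins obtained by deleting spin j, setting the coupling between i and each k ∉ {i, j} to J_{ik} − J_{jk}, and setting the field at i to h_i − h_j (all other couplings and fields unchanged). If every ground state s of H satisfies s_i = −s_j, then min H_FM = min H − J_{ij}, and the map sending a configuration s' on the remaining n−1 spins to its extension with s_j := −s_i is a bijection from the ground states of H_FM onto the ground states of H. -/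
open Finset

lemma ising_eq_half {ι : Type*} [Fintype ι] [LinearOrder ι]
    (J : ι → ι → ℝ) (h : ι → ℝ) (hs : ∀ k l, J k l = J l k) (s : ι → ℝ) :
    ising J h s
      = -((∑ k, ∑ l, J k l * s k * s l) - ∑ k, J k k * s k * s k) / 2
        - ∑ k, h k * s k := by
  have h1 : ∀ k l : ι, J k l * s k * s l
      = (if k < l then J k l * s k * s l else 0)
        + ((if l < k then J k l * s k * s l else 0)
          + (if k = l then J k l * s k * s l else 0)) := by
    intro k l
    rcases lt_trichotomy k l with hkl | hkl | hkl
    · simp [hkl, asymm hkl, hkl.ne]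
    · simp [hkl, lt_irrefl]
    · simp [hkl, asymm hkl, hkl.ne']
  have h2 : (∑ k, ∑ l : ι, if l < k then J k l * s k * s l else 0)
      = ∑ k, ∑ l : ι, if k < l then J k l * s k * s l else 0 := by
    rw [Finset.sum_comm]
    refine Finset.sum_congr rfl fun k _ => Finset.sum_congr rfl fun l _ => ?_
    have : J l k * s l * s k = J k l * s k * s l := by rw [hs]; ring
    rw [this]
  have h3 : (∑ k, ∑ l : ι, if k = l then J k l * s k * s l else 0)
      = ∑ k, J k k * s k * s k := by
    refine Finset.sum_congr rfl fun k _ => ?_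
    simp [Finset.sum_ite_eq]
  have tri : (∑ k, ∑ l, J k l * s k * s l)
      = (∑ k, ∑ l, if k < l then J k l * s k * s l else 0)
        + ((∑ k, ∑ l, if k < l then J k l * s k * s l else 0)
          + ∑ k, J k k * s k * s k) := by
    calc (∑ k, ∑ l, J k l * s k * s l)
        = ∑ k, ∑ l : ι, ((if k < l then J k l * s k * s l else 0)
            + ((if l < k then J k l * s k * s l else 0)
              + (if k = l then J k l * s k * s l else 0))) := by
          refine Finset.sum_congr rfl fun k _ => Finset.sum_congr rfl fun l _ => h1 k l
      _ = (∑ k, ∑ l, if k < l then J k l * s k * s l else 0)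
            + ((∑ k, ∑ l : ι, if l < k then J k l * s k * s l else 0)
              + ∑ k, ∑ l : ι, if k = l then J k l * s k * s l else 0) := by
          simp [Finset.sum_add_distrib]
      _ = _ := by rw [h2, h3]
  unfold ising
  linarith [tri]

lemma energy_isLeast {ι : Type*} [Fintype ι] [LinearOrder ι]
    (J : ι → ι → ℝ) (h : ι → ℝ) :
    IsLeast {E : ℝ | ∃ s : ι → ℝ, SpinVec s ∧ ising J h s = E}
      (sInf {E : ℝ | ∃ s : ι → ℝ, SpinVec s ∧ ising J h s = E}) := by
  have hset : {E : ℝ | ∃ s, SpinVec s ∧ ising J h s = E}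
      = ising J h '' {s | SpinVec s} := by
    ext E; simp [Set.mem_image, Set.mem_setOf_eq]
  have hfin : {E : ℝ | ∃ s, SpinVec s ∧ ising J h s = E}.Finite := by
    rw [hset]
    apply Set.Finite.image
    apply Set.Finite.subset (Set.Finite.pi (fun _ : ι => (Set.finite_singleton (-1:ℝ)).insert 1))
    intro s hs
    simp only [Set.mem_pi, Set.mem_univ, forall_true_left]
    intro k; rcases hs k with h1 | h1 <;> simp [h1]
  have hne : {E : ℝ | ∃ s, SpinVec s ∧ ising J h s = E}.Nonempty :=
    ⟨ising J h (fun _ => 1), fun _ => 1, fun _ => Or.inl rfl, rfl⟩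
  exact ⟨hne.csInf_mem hfin, fun x hx => csInf_le hfin.bddBelow hx⟩

lemma groundState_iff {ι : Type*} [Fintype ι] [LinearOrder ι]
    (J : ι → ι → ℝ) (h : ι → ℝ) (s : ι → ℝ) :
    GroundState J h s
      ↔ SpinVec s ∧ ising J h s = sInf {E : ℝ | ∃ t : ι → ℝ, SpinVec t ∧ ising J h t = E} := by
  obtain ⟨⟨t0, ht0, ht0e⟩, hlb⟩ := energy_isLeast J h
  constructor
  · rintro ⟨hs, hmin⟩
    refine ⟨hs, le_antisymm ?_ (hlb ⟨s, hs, rfl⟩)⟩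
    rw [← ht0e]; exact hmin t0 ht0
  · rintro ⟨hs, he⟩
    exact ⟨hs, fun t ht => he ▸ hlb ⟨t, ht, rfl⟩⟩

lemma sum_erase_subtype {n : ℕ} (j : Fin n) (f : Fin n → ℝ) :
    ∑ k ∈ (univ : Finset (Fin n)).erase j, f k = ∑ k : {k : Fin n // k ≠ j}, f k :=
  Finset.sum_subtype _ (by simp) f

lemma flipMerge_energy {n : ℕ} (J : Fin n → Fin n → ℝ) (h : Fin n → ℝ)
    (hJsymm : ∀ k l, J k l = J l k)
    (i j : Fin n) (hij : i ≠ j)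
    (J' : {k : Fin n // k ≠ j} → {k : Fin n // k ≠ j} → ℝ)
    (h' : {k : Fin n // k ≠ j} → ℝ)
    (hJ' : ∀ k l : {k : Fin n // k ≠ j},
      J' k l = if (k : Fin n) = i then J k l - J j l
               else if (l : Fin n) = i then J k l - J k j
               else J k l)
    (hh' : ∀ k : {k : Fin n // k ≠ j},
      h' k = if (k : Fin n) = i then h i - h j else h k)
    (s' : {k : Fin n // k ≠ j} → ℝ) :
    ising J h (fun k => if hk : k = j then -(s' ⟨i, hij⟩) else s' ⟨k, hk⟩)
      = ising J' h' s' + J i j * (s' ⟨i, hij⟩ * s' ⟨i, hij⟩) := by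
  set a := s' ⟨i, hij⟩ with ha
  set s : Fin n → ℝ := fun k => if hk : k = j then -a else s' ⟨k, hk⟩ with hsdef
  have hsk : ∀ (k : Fin n) (hk : k ≠ j), s k = s' ⟨k, hk⟩ := fun k hk => by
    simp [hsdef, hk]
  have hsj : s j = -a := by simp [hsdef]
  have hsi : s i = a := hsk i hij
  have hJ'symm : ∀ k l, J' k l = J' l k := by
    intro k l
    rw [hJ' k l, hJ' l k]
    split_ifs with h1 h2 h2 h3
    · rw [h1, h2]
    · rw [hJsymm (l : Fin n) (k : Fin n), hJsymm (l : Fin n) j]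
    · rw [hJsymm (k : Fin n) (l : Fin n), hJsymm (k : Fin n) j]
    · exact hJsymm _ _
  rw [ising_eq_half J h hJsymm s, ising_eq_half J' h' hJ'symm s']
  set e : Finset (Fin n) := (univ : Finset (Fin n)).erase j with he
  have hie : i ∈ e := by simp [he, hij]
  set G : Fin n → Fin n → ℝ := fun k l =>
    if k = i then J k l - J j l else if l = i then J k l - J k j else J k l with hG
  have hGi : ∀ l, G i l = J i l - J j l := fun l => by simp [hG]
  have hGk : ∀ k, k ≠ i → G k i = J k i - J k j := fun k hk => by simp [hG, hk]
  have hGkl : ∀ k l, k ≠ i → l ≠ i → G k l = J k l := fun k l hk hl => by simp [hG, hk, hl]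
  -- convert the subtype sums to sums over e
  have hQ' : (∑ k : {k : Fin n // k ≠ j}, ∑ l : {k : Fin n // k ≠ j}, J' k l * s' k * s' l)
      = ∑ k ∈ e, ∑ l ∈ e, G k l * s k * s l := by
    rw [he, sum_erase_subtype j (fun k => ∑ l ∈ (univ : Finset (Fin n)).erase j, G k l * s k * s l)]
    refine Finset.sum_congr rfl fun k _ => ?_
    rw [sum_erase_subtype j (fun l => G (↑k) l * s (↑k) * s l)]
    refine Finset.sum_congr rfl fun l _ => ?_
    rw [hJ' k l, hsk _ k.2, hsk _ l.2]
  have hD' : (∑ k : {k : Fin n // k ≠ j}, J' k k * s' k * s' k)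
      = ∑ k ∈ e, G k k * s k * s k := by
    rw [he, sum_erase_subtype j (fun k => G k k * s k * s k)]
    refine Finset.sum_congr rfl fun k _ => ?_
    rw [hJ' k k, hsk _ k.2]
  have hF' : (∑ k : {k : Fin n // k ≠ j}, h' k * s' k)
      = ∑ k ∈ e, (if k = i then h i - h j else h k) * s k := by
    rw [he, sum_erase_subtype j (fun k => (if k = i then h i - h j else h k) * s k)]
    refine Finset.sum_congr rfl fun k _ => ?_
    rw [hh' k, hsk _ k.2]
  rw [hQ', hD', hF']
  -- split full sums at j
  have hQsplit : (∑ k, ∑ l, J k l * s k * s l)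
      = (∑ k ∈ e, ∑ l ∈ e, J k l * s k * s l)
        + (∑ k ∈ e, J k j * s k * s j)
        + ((∑ l ∈ e, J j l * s j * s l) + J j j * s j * s j) := by
    have inner : ∀ k : Fin n, (∑ l, J k l * s k * s l)
        = (∑ l ∈ e, J k l * s k * s l) + J k j * s k * s j :=
      fun k => (Finset.sum_erase_add univ _ (mem_univ j)).symm
    rw [← Finset.sum_erase_add univ (fun k => ∑ l, J k l * s k * s l) (mem_univ j)]
    simp only [inner]
    rw [Finset.sum_add_distrib]
  have hDsplit : (∑ k, J k k * s k * s k)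
      = (∑ k ∈ e, J k k * s k * s k) + J j j * s j * s j :=
    (Finset.sum_erase_add univ _ (mem_univ j)).symm
  have hFsplit : (∑ k, h k * s k) = (∑ k ∈ e, h k * s k) + h j * s j :=
    (Finset.sum_erase_add univ _ (mem_univ j)).symm
  rw [hQsplit, hDsplit, hFsplit]
  -- expand the G-sum
  have expand : ∀ K : Fin n → Fin n → ℝ,
      (∑ k ∈ e, ∑ l ∈ e, K k l * s k * s l)
        = (∑ l ∈ e, K i l * s i * s l)
          + ∑ k ∈ e.erase i, (K k i * s k * s i + ∑ l ∈ e.erase i, K k l * s k * s l) := by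
    intro K
    rw [← Finset.add_sum_erase e _ hie]
    congr 1
    refine Finset.sum_congr rfl fun k _ => ?_
    rw [← Finset.add_sum_erase e (fun l => K k l * s k * s l) hie]
  have hGsum : (∑ k ∈ e, ∑ l ∈ e, G k l * s k * s l)
      = (∑ k ∈ e, ∑ l ∈ e, J k l * s k * s l)
        - (∑ l ∈ e, J j l * s i * s l)
        - (∑ k ∈ e.erase i, J k j * s k * s i) := by
    rw [expand G, expand J]
    have h1 : (∑ l ∈ e, G i l * s i * s l)
        = (∑ l ∈ e, J i l * s i * s l) - (∑ l ∈ e, J j l * s i * s l) := by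
      rw [← Finset.sum_sub_distrib]
      exact Finset.sum_congr rfl fun l _ => by rw [hGi]; ring
    have h2 : (∑ k ∈ e.erase i, (G k i * s k * s i + ∑ l ∈ e.erase i, G k l * s k * s l))
        = (∑ k ∈ e.erase i, (J k i * s k * s i + ∑ l ∈ e.erase i, J k l * s k * s l))
          - (∑ k ∈ e.erase i, J k j * s k * s i) := by
      rw [← Finset.sum_sub_distrib]
      refine Finset.sum_congr rfl fun k hk => ?_
      have hk' : k ≠ i := (Finset.mem_erase.mp hk).1
      have h3 : (∑ l ∈ e.erase i, G k l * s k * s l)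
          = ∑ l ∈ e.erase i, J k l * s k * s l :=
        Finset.sum_congr rfl fun l hl => by rw [hGkl k l hk' (Finset.mem_erase.mp hl).1]
      rw [hGk k hk', h3]; ring
    rw [h1, h2]; ring
  rw [hGsum]
  -- cross-term symmetries and pulling out s i / s j
  have hcross1 : (∑ l ∈ e, J j l * s j * s l) = (∑ k ∈ e, J k j * s k) * s j := by
    rw [Finset.sum_mul]
    exact Finset.sum_congr rfl fun l _ => by rw [hJsymm j l]; ring
  have hcross2 : (∑ l ∈ e, J j l * s i * s l) = (∑ k ∈ e, J k j * s k) * s i := by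
    rw [Finset.sum_mul]
    exact Finset.sum_congr rfl fun l _ => by rw [hJsymm j l]; ring
  have hcross3 : (∑ k ∈ e, J k j * s k * s j) = (∑ k ∈ e, J k j * s k) * s j := by
    rw [Finset.sum_mul]
  have hsplit_i : (∑ k ∈ e, J k j * s k * s i)
      = J i j * s i * s i + ∑ k ∈ e.erase i, J k j * s k * s i := by
    rw [← Finset.add_sum_erase e (fun k => J k j * s k * s i) hie, hsi]
  have hsplit_i' : (∑ k ∈ e.erase i, J k j * s k * s i)
      = (∑ k ∈ e, J k j * s k) * s i - J i j * s i * s i := by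
    have hp : (∑ k ∈ e, J k j * s k) * s i = ∑ k ∈ e, J k j * s k * s i :=
      Finset.sum_mul _ _ _
    linarith [hsplit_i, hp]
  -- diagonal
  have hDG : (∑ k ∈ e, G k k * s k * s k)
      = (∑ k ∈ e, J k k * s k * s k) - J j i * s i * s i := by
    rw [← Finset.add_sum_erase e (fun k => G k k * s k * s k) hie,
        ← Finset.add_sum_erase e (fun k => J k k * s k * s k) hie]
    have h2 : (∑ k ∈ e.erase i, G k k * s k * s k)
        = ∑ k ∈ e.erase i, J k k * s k * s k :=
      Finset.sum_congr rfl fun k hk => by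
        rw [hGkl k k (Finset.mem_erase.mp hk).1 (Finset.mem_erase.mp hk).1]
    rw [hGi i, h2]; ring
  -- field
  have hFG : (∑ k ∈ e, (if k = i then h i - h j else h k) * s k)
      = (∑ k ∈ e, h k * s k) - h j * s i := by
    rw [← Finset.add_sum_erase e (fun k => (if k = i then h i - h j else h k) * s k) hie,
        ← Finset.add_sum_erase e (fun k => h k * s k) hie]
    have h2 : (∑ k ∈ e.erase i, (if k = i then h i - h j else h k) * s k)
        = ∑ k ∈ e.erase i, h k * s k :=
      Finset.sum_congr rfl fun k hk => by rw [if_neg (Finset.mem_erase.mp hk).1]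
    rw [if_pos rfl, h2]; ring
  rw [hcross1, hcross2, hcross3, hsplit_i', hDG, hFG, hsi, hsj, hJsymm j i]
  ring

/-- If every ground state of `H` has `s_i = −s_j` (the edge `(i,j)` is anti-aligned),
then the flip-merged Hamiltonian `H_FM` (delete spin `j`, set the coupling between `i`
and each `k ∉ {i,j}` to `J_{ik} − J_{jk}`, set the field at `i` to `h_i − h_j`) satisfies
`min H_FM = min H − J_{ij}`, and extending a configuration on the remaining spins by
`s_j := −s_i` is a bijection from the ground states of `H_FM` onto the ground states
of `H`. -/

theorem ising_flipMerge_groundStates {n : ℕ} (J : Fin n → Fin n → ℝ) (h : Fin n → ℝ)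
    (hJsymm : ∀ k l, J k l = J l k)
    (i j : Fin n) (hij : i ≠ j)
    (J' : {k : Fin n // k ≠ j} → {k : Fin n // k ≠ j} → ℝ)
    (h' : {k : Fin n // k ≠ j} → ℝ)
    (hJ' : ∀ k l : {k : Fin n // k ≠ j},
      J' k l = if (k : Fin n) = i then J k l - J j l
               else if (l : Fin n) = i then J k l - J k j
               else J k l)
    (hh' : ∀ k : {k : Fin n // k ≠ j},
      h' k = if (k : Fin n) = i then h i - h j else h k)
    (hanti : ∀ s : Fin n → ℝ, GroundState J h s → s i = -(s j)) :
    sInf {E : ℝ | ∃ s' : {k : Fin n // k ≠ j} → ℝ, SpinVec s' ∧ ising J' h' s' = E}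
      = sInf {E : ℝ | ∃ s : Fin n → ℝ, SpinVec s ∧ ising J h s = E} - J i j ∧
    Set.BijOn
      (fun (s' : {k : Fin n // k ≠ j} → ℝ) (k : Fin n) =>
        if hk : k = j then -(s' ⟨i, hij⟩) else s' ⟨k, hk⟩)
      {s' | GroundState J' h' s'} {s | GroundState J h s} := by
  have key := flipMerge_energy J h hJsymm i j hij J' h' hJ' hh'
  have keySpin : ∀ s' : {k : Fin n // k ≠ j} → ℝ, SpinVec s' →
      ising J h (fun k => if hk : k = j then -(s' ⟨i, hij⟩) else s' ⟨k, hk⟩)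
        = ising J' h' s' + J i j := by
    intro s' hs'
    rw [key s']
    rcases hs' ⟨i, hij⟩ with h1 | h1 <;> rw [h1] <;> ring
  have extSpin : ∀ s' : {k : Fin n // k ≠ j} → ℝ, SpinVec s' →
      SpinVec (fun k : Fin n => if hk : k = j then -(s' ⟨i, hij⟩) else s' ⟨k, hk⟩) := by
    intro s' hs' k
    by_cases hk : k = j
    · rcases hs' ⟨i, hij⟩ with h1 | h1 <;> simp [hk, h1]
    · simpa [hk] using hs' ⟨k, hk⟩
  have rSpin : ∀ s : Fin n → ℝ, SpinVec s →
      SpinVec (fun k : {k : Fin n // k ≠ j} => s ↑k) := fun s hs k => hs ↑k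
  have extr : ∀ s : Fin n → ℝ, s j = -(s i) →
      (fun k : Fin n => if hk : k = j then -((fun k : {k : Fin n // k ≠ j} => s ↑k) ⟨i, hij⟩)
        else (fun k : {k : Fin n // k ≠ j} => s ↑k) ⟨k, hk⟩) = s := by
    intro s hs
    funext k
    by_cases hk : k = j
    · simp only [hk, dif_pos]
      rw [hs]
    · simp [hk]
  obtain ⟨⟨s0, hs0spin, hs0E⟩, hlbH⟩ := energy_isLeast J h
  obtain ⟨⟨t0, ht0spin, ht0E⟩, hlbH'⟩ := energy_isLeast J' h'
  set mH := sInf {E : ℝ | ∃ s : Fin n → ℝ, SpinVec s ∧ ising J h s = E} with hmH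
  set mH' := sInf {E : ℝ | ∃ s' : {k : Fin n // k ≠ j} → ℝ, SpinVec s' ∧ ising J' h' s' = E}
    with hmH'
  have hs0gs : GroundState J h s0 := (groundState_iff J h s0).mpr ⟨hs0spin, hs0E⟩
  have hs0j : s0 j = -(s0 i) := by have := hanti s0 hs0gs; linarith
  have h1 : ising J' h' (fun k : {k : Fin n // k ≠ j} => s0 ↑k) = mH - J i j := by
    have hk := keySpin _ (rSpin s0 hs0spin)
    rw [extr s0 hs0j] at hk
    linarith [hs0E]
  have hle1 : mH' ≤ mH - J i j := h1 ▸ hlbH' ⟨_, rSpin s0 hs0spin, rfl⟩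
  have h2 : ising J h (fun k : Fin n => if hk : k = j then -(t0 ⟨i, hij⟩) else t0 ⟨k, hk⟩)
      = mH' + J i j := by rw [keySpin t0 ht0spin, ht0E]
  have hle2 : mH ≤ mH' + J i j := h2 ▸ hlbH ⟨_, extSpin t0 ht0spin, rfl⟩
  have hmin : mH' = mH - J i j := le_antisymm hle1 (by linarith)
  refine ⟨hmin, ?_, ?_, ?_⟩
  · -- MapsTo
    intro s' hs'gs
    have hs'spin := hs'gs.1
    have hs'E : ising J' h' s' = mH' := ((groundState_iff J' h' s').mp hs'gs).2
    refine (groundState_iff J h _).mpr ⟨extSpin s' hs'spin, ?_⟩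
    rw [keySpin s' hs'spin, hs'E, hmin]
    ring
  · -- InjOn
    intro s' _ t' _ hEq
    funext k
    have hk := congrFun hEq (↑k : Fin n)
    simp only at hk
    rw [dif_neg k.2, dif_neg k.2] at hk
    exact hk
  · -- SurjOn
    intro s hsgs
    have hsspin := hsgs.1
    have hsj : s j = -(s i) := by have := hanti s hsgs; linarith
    refine ⟨fun k : {k : Fin n // k ≠ j} => s ↑k, ?_, extr s hsj⟩
    have hsE : ising J h s = mH := ((groundState_iff J h s).mp hsgs).2
    have hval : ising J' h' (fun k : {k : Fin n // k ≠ j} => s ↑k) = mH' := by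
      have hk := keySpin _ (rSpin s hsspin)
      rw [extr s hsj] at hk
      rw [hmin]
      linarith
    exact (groundState_iff J' h' _).mpr ⟨rSpin s hsspin, hval⟩
end
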